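/- arXiv:2006.09702 — 3 statements merged into one kernel-verified Lean document; each statement's English description precedes it below -/
import Mathlib

section
/- Conditional mean shift under truncation: Let P be a distribution on ℝ with mean μ_P and E[(X − μ_P)²] ≤ σ_P², and let ε ∈ (0, 1/2]. Let P' be P conditioned on the event 𝓔 = {x : |x − μ_P| ≤ σ_P/√ε} (which has probability at least 1 − ε by Markov's inequality), and let μ_{P'} be the mean of P'. Then |μ_{P'} − μ_P| ≤ 2 √ε σ_P. -/
open MeasureTheory Matrix
open scoped BigOperators ENNReal NNReal

noncomputable section

/-- Squared Euclidean norm of a vector in `ℝ^d`. -/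
def enormSq {d : ℕ} (x : Fin d → ℝ) : ℝ := ∑ i, x i ^ 2

/-- Euclidean norm of a vector in `ℝ^d`. -/
def euclNorm {d : ℕ} (x : Fin d → ℝ) : ℝ := Real.sqrt (enormSq x)

/-- Frobenius norm of a matrix. -/
def frobNorm {m n : ℕ} (A : Matrix (Fin m) (Fin n) ℝ) : ℝ :=
  Real.sqrt (∑ i, ∑ j, A i j ^ 2)

/-- Spectral norm (ℓ₂ operator norm) of a square matrix. -/
def specNorm {d : ℕ} (A : Matrix (Fin d) (Fin d) ℝ) : ℝ :=
  ‖Matrix.toEuclideanCLM (𝕜 := ℝ) A‖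

/-- Nuclear norm: the sum of the singular values. -/
def nucNorm {d : ℕ} (A : Matrix (Fin d) (Fin d) ℝ) : ℝ :=
  ∑ i, Real.sqrt ((Matrix.isHermitian_conjTranspose_mul_self A).eigenvalues i)

open scoped Classical in
/-- Best rank-`k` approximation of a symmetric matrix: keep the `k` largest eigenvalues
(ties broken by index) in an eigendecomposition; junk value `0` on non-symmetric input. -/
def Pk {d : ℕ} (k : ℕ) (A : Matrix (Fin d) (Fin d) ℝ) : Matrix (Fin d) (Fin d) ℝ :=
  if hA : A.IsHermitian then
    (hA.eigenvectorUnitary : Matrix (Fin d) (Fin d) ℝ) *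
      Matrix.diagonal (fun i =>
        if (Finset.univ.filter fun j =>
              hA.eigenvalues i < hA.eigenvalues j ∨
                (hA.eigenvalues i = hA.eigenvalues j ∧ j < i)).card < k
        then hA.eigenvalues i else 0) *
      star (hA.eigenvectorUnitary : Matrix (Fin d) (Fin d) ℝ)
  else 0

/-- A `d × k` matrix is semi-orthogonal if `Vᵀ V = I_k`. -/
def IsSemiOrtho {d k : ℕ} (V : Matrix (Fin d) (Fin k) ℝ) : Prop := Vᵀ * V = 1

/-- `U` is a matrix of top-`k` singular vectors of the positive semidefinite matrix `M`:
it is semi-orthogonal and maximizes `Tr(Vᵀ M V)` among semi-orthogonal matrices. -/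
def IsTopKSingular {d k : ℕ} (M : Matrix (Fin d) (Fin d) ℝ)
    (U : Matrix (Fin d) (Fin k) ℝ) : Prop :=
  IsSemiOrtho U ∧ ∀ V : Matrix (Fin d) (Fin k) ℝ, IsSemiOrtho V →
    (Vᵀ * M * V).trace ≤ (Uᵀ * M * U).trace

/-- `s` is an `α`-corruption of the sample `g`: as multisets, `s = (g \ L) ∪ E`
with `L ⊆ g` and `|E| = |L| ≤ α n`. -/
def IsCorruptionOf {V : Type*} (α : ℝ) {n : ℕ} (g s : Fin n → V) : Prop :=
  ∃ L E : Multiset V, L ≤ (List.ofFn g : Multiset V) ∧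
    Multiset.card E = Multiset.card L ∧ (Multiset.card L : ℝ) ≤ α * n ∧
    (List.ofFn s : Multiset V) + L = (List.ofFn g : Multiset V) + E

/-- The standard Gaussian measure `N(0, I_d)` on `ℝ^d`. -/
def stdGaussian (d : ℕ) : Measure (Fin d → ℝ) :=
  Measure.pi fun _ => ProbabilityTheory.gaussianReal 0 1

/-- Total variation distance between two measures. -/
def tvDist {Ω : Type*} [MeasurableSpace Ω] (μ ν : Measure Ω) : ℝ :=
  ⨆ s : Set Ω, |(μ s).toReal - (ν s).toReal|
/-- Matrices over `ℝ` carry the Borel (product) σ-algebra. -/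
instance matrixMeasurableSpace {m n : ℕ} : MeasurableSpace (Matrix (Fin m) (Fin n) ℝ) :=
  (inferInstance : MeasurableSpace (Fin m → Fin n → ℝ))

/-- **Conditional mean shift under truncation.** Conditioning a distribution with mean
`μP` and second central moment at most `σP²` on the event `{|x − μP| ≤ σP/√ε}` shifts
the mean by at most `2 √ε σP`. -/
theorem conditional_mean_shift
    (P : Measure ℝ) [IsProbabilityMeasure P] (μP σP ε : ℝ)
    (hσ : 0 ≤ σP) (hε0 : 0 < ε) (hε1 : ε ≤ 1 / 2)
    (hint : Integrable (fun x : ℝ => x) P) (hmean : (∫ x, x ∂P) = μP)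
    (hint2 : Integrable (fun x : ℝ => (x - μP) ^ 2) P)
    (hvar : (∫ x, (x - μP) ^ 2 ∂P) ≤ σP ^ 2) :
    |(∫ x, x ∂(ProbabilityTheory.cond P {x : ℝ | |x - μP| ≤ σP / Real.sqrt ε})) - μP| ≤
      2 * Real.sqrt ε * σP := by
  have hsε : 0 < Real.sqrt ε := Real.sqrt_pos.2 hε0
  set c := σP / Real.sqrt ε with hc
  have hc0 : 0 ≤ c := div_nonneg hσ hsε.le
  set E : Set ℝ := {x : ℝ | |x - μP| ≤ c} with hE
  have hEmeas : MeasurableSet E := by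
    have : E = (fun x : ℝ => |x - μP|) ⁻¹' (Set.Iic c) := rfl
    rw [this]
    exact ((measurable_id.sub_const μP).abs) measurableSet_Iic
  have hintsub : Integrable (fun x : ℝ => x - μP) P := hint.sub (integrable_const μP)
  have hzero : ∫ x, (x - μP) ∂P = 0 := by
    rw [integral_sub hint (integrable_const μP)]
    simp [hmean]
  rcases eq_or_lt_of_le hσ with hσ0 | hσpos
  · -- σP = 0 case
    have hvar0 : ∫ x, (x - μP) ^ 2 ∂P = 0 :=
      le_antisymm (by simpa [← hσ0] using hvar) (integral_nonneg fun x => sq_nonneg _)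
    have hae : ∀ᵐ x ∂P, x ∈ E := by
      have h := (integral_eq_zero_iff_of_nonneg (fun x => sq_nonneg _) hint2).1 hvar0
      filter_upwards [h] with x hx
      have hx0 : (x - μP) ^ 2 = 0 := hx
      have : x - μP = 0 := by nlinarith [sq_nonneg (x - μP)]
      simp [hE, this, hc0]
    have hres : P.restrict E = P := Measure.restrict_eq_self_of_ae_mem hae
    have hPE : P E = 1 := by
      rw [← prob_compl_eq_zero_iff hEmeas]
      rwa [ae_iff] at hae
    rw [ProbabilityTheory.cond, hPE, hres]
    simp [hmean]
    positivity
  · -- σP > 0 case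
    have hcpos : 0 < c := div_pos hσpos hsε
    -- Chebyshev: P Eᶜ ≤ ε
    have hsub : Eᶜ ⊆ {x : ℝ | c ^ 2 ≤ (x - μP) ^ 2} := by
      intro x hx
      have hx' : c < |x - μP| := not_le.mp hx
      have h2 := sq_abs (x - μP)
      have h3 := abs_nonneg (x - μP)
      have h4 : c * c ≤ |x - μP| * |x - μP| := mul_le_mul hx'.le hx'.le hc0 h3
      show c ^ 2 ≤ (x - μP) ^ 2
      nlinarith
    have hcheb : c ^ 2 * (P {x : ℝ | c ^ 2 ≤ (x - μP) ^ 2}).toReal ≤ σP ^ 2 :=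
      (mul_meas_ge_le_integral_of_nonneg (ae_of_all _ fun x => sq_nonneg _) hint2 _).trans hvar
    have hmono : (P Eᶜ).toReal ≤ (P {x : ℝ | c ^ 2 ≤ (x - μP) ^ 2}).toReal :=
      ENNReal.toReal_mono (measure_ne_top _ _) (measure_mono hsub)
    have hc2 : c ^ 2 = σP ^ 2 / ε := by
      rw [hc, div_pow, Real.sq_sqrt hε0.le]
    have hPEc : (P Eᶜ).toReal ≤ ε := by
      have h1 : c ^ 2 * (P Eᶜ).toReal ≤ σP ^ 2 := by nlinarith [ENNReal.toReal_nonneg (a := P Eᶜ)]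
      rw [hc2] at h1
      have hσ2 : 0 < σP ^ 2 := by positivity
      rw [div_mul_eq_mul_div, div_le_iff₀ hε0] at h1
      nlinarith
    set pE := (P E).toReal with hpE
    have hsum : pE + (P Eᶜ).toReal = 1 := by
      rw [hpE, ← ENNReal.toReal_add (measure_ne_top _ _) (measure_ne_top _ _),
        measure_add_measure_compl hEmeas]
      simp
    have hpElb : 1 - ε ≤ pE := by linarith
    have hpEpos : 0 < pE := by linarith
    -- conditional integral
    have hcond : ∫ x, x ∂(ProbabilityTheory.cond P E) = pE⁻¹ * ∫ x in E, x ∂P := by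
      rw [ProbabilityTheory.cond, integral_smul_measure, ENNReal.toReal_inv, smul_eq_mul]
    -- split integral
    have hsplit : (∫ x in E, (x - μP) ∂P) + ∫ x in Eᶜ, (x - μP) ∂P = 0 := by
      rw [integral_add_compl hEmeas hintsub, hzero]
    -- constant integral on E
    have hconstE : ∫ x in E, (x - μP) ∂P = (∫ x in E, x ∂P) - μP * pE := by
      rw [integral_sub hint.integrableOn (integrableOn_const (measure_ne_top _ _))]
      rw [setIntegral_const]
      rw [smul_eq_mul, mul_comm, Measure.real]
    -- bound the tail integral
    have htail : |∫ x in Eᶜ, (x - μP) ∂P| ≤ Real.sqrt ε * σP := by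
      have h1 : |∫ x in Eᶜ, (x - μP) ∂P| ≤ ∫ x in Eᶜ, |x - μP| ∂P := by
        simpa [Real.norm_eq_abs] using
          norm_integral_le_integral_norm (μ := P.restrict Eᶜ) (f := fun x => x - μP)
      have h2 : ∫ x in Eᶜ, |x - μP| ∂P ≤ ∫ x in Eᶜ, (x - μP) ^ 2 / c ∂P := by
        apply setIntegral_mono_on hintsub.abs.integrableOn
          (hint2.div_const c).integrableOn hEmeas.compl
        intro x hx
        have hx' : c < |x - μP| := not_le.mp hx
        rw [le_div_iff₀ hcpos, ← sq_abs]
        nlinarith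
      have h3 : ∫ x in Eᶜ, (x - μP) ^ 2 / c ∂P ≤ ∫ x, (x - μP) ^ 2 / c ∂P := by
        apply setIntegral_le_integral (hint2.div_const c)
        exact ae_of_all _ fun x => by positivity
      have h4 : ∫ x, (x - μP) ^ 2 / c ∂P = (∫ x, (x - μP) ^ 2 ∂P) / c := by
        rw [integral_div]
      have h5 : (∫ x, (x - μP) ^ 2 ∂P) / c ≤ σP ^ 2 / c := by gcongr
      have h6 : σP ^ 2 / c = Real.sqrt ε * σP := by
        rw [hc]
        field_simp
      linarith
    -- conclude
    set T := ∫ x in Eᶜ, (x - μP) ∂P with hT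
    have hET : ∫ x in E, x ∂P = μP * pE - T := by linarith
    have hne : pE ≠ 0 := ne_of_gt hpEpos
    rw [hcond, hET, show pE⁻¹ * (μP * pE - T) - μP = -(T * pE⁻¹) by field_simp; ring,
      abs_neg, abs_mul, abs_inv, abs_of_pos hpEpos]
    have hinv2 : pE⁻¹ ≤ 2 := by
      rw [show (2:ℝ) = (1/2 : ℝ)⁻¹ by norm_num]
      exact inv_anti₀ (by norm_num) (by linarith)
    have hsqnn : 0 ≤ Real.sqrt ε * σP := by positivity
    calc |T| * pE⁻¹ ≤ (Real.sqrt ε * σP) * 2 :=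
          mul_le_mul htail hinv2 (inv_nonneg.2 hpEpos.le) hsqnn
      _ = 2 * Real.sqrt ε * σP := by ring


end
end

section
/- Deterministic resilience of PSD trace sums: Let X₁,…,X_n ∈ ℝ^{d×d} be positive semidefinite, let M ∈ ℝ^{d×d} be positive semidefinite, let V ∈ ℝ^{d×k} be semi-orthogonal, and let ν > 0, ε ∈ (0,1]. Write z_i = Tr(Vᵀ(X_i − M)V). Assume |Σ_{i=1}^n z_i| ≤ n ν√(kε), and assume that the index set G_M = {i : |z_i| ≤ 3ν√(k/ε)} satisfies |{1,…,n} \ G_M| ≤ εn and |Σ_{i∈G_M} z_i| ≤ 2 n ν√(kε). Then every subset T ⊆ {1,…,n} with |T| ≤ εn satisfies Σ_{i∈T} z_i ≤ 6 n ν√(kε) + n ε Tr(Vᵀ M V). -/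
open MeasureTheory Matrix
open scoped BigOperators ENNReal NNReal

noncomputable section

lemma psd_trace_nonneg {d : ℕ} {A : Matrix (Fin d) (Fin d) ℝ} (hA : A.PosSemidef) :
    0 ≤ A.trace := by
  apply Finset.sum_nonneg
  intro i _
  exact hA.diag_nonneg

lemma conj_psd_trace_nonneg {d k : ℕ} {M : Matrix (Fin d) (Fin d) ℝ} (hM : M.PosSemidef)
    (V : Matrix (Fin d) (Fin k) ℝ) : 0 ≤ (Vᵀ * M * V).trace := by
  have hVt : Vᴴ = Vᵀ := by ext i j; simp [Matrix.conjTranspose_apply]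
  have := hM.conjTranspose_mul_mul_same V
  rw [hVt] at this
  exact psd_trace_nonneg this

/-- **Deterministic resilience of PSD trace sums.** If the total trace sum and the
trace sum over the "bounded" indices `G_M` are controlled, then the trace sum over any
`εn`-small subset is at most `6 n ν √(kε) + n ε Tr(Vᵀ M V)`. -/
theorem deterministic_resilience
    {d k n : ℕ} (X : Fin n → Matrix (Fin d) (Fin d) ℝ) (hX : ∀ i, (X i).PosSemidef)
    (M : Matrix (Fin d) (Fin d) ℝ) (hM : M.PosSemidef)
    (V : Matrix (Fin d) (Fin k) ℝ) (hV : IsSemiOrtho V)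
    (ν ε : ℝ) (hν : 0 < ν) (hε0 : 0 < ε) (hε1 : ε ≤ 1)
    (z : Fin n → ℝ) (hz : ∀ i, z i = (Vᵀ * (X i - M) * V).trace)
    (hsum : |∑ i, z i| ≤ n * ν * Real.sqrt (k * ε))
    (GM : Finset (Fin n)) (hGM : ∀ i, i ∈ GM ↔ |z i| ≤ 3 * ν * Real.sqrt (k / ε))
    (hGMc : ((Finset.univ \ GM).card : ℝ) ≤ ε * n)
    (hGMsum : |∑ i ∈ GM, z i| ≤ 2 * n * ν * Real.sqrt (k * ε)) :
    ∀ T : Finset (Fin n), (T.card : ℝ) ≤ ε * n →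
      ∑ i ∈ T, z i ≤ 6 * n * ν * Real.sqrt (k * ε) + n * ε * (Vᵀ * M * V).trace := by
  intro T hT
  set m := (Vᵀ * M * V).trace with hm_def
  have hm : 0 ≤ m := conj_psd_trace_nonneg hM V
  have hlow : ∀ i, -m ≤ z i := by
    intro i
    rw [hz i]
    have hexp : Vᵀ * (X i - M) * V = Vᵀ * X i * V - Vᵀ * M * V := by
      rw [Matrix.mul_sub, Matrix.sub_mul]
    rw [hexp, Matrix.trace_sub]
    have h1 : 0 ≤ (Vᵀ * X i * V).trace := conj_psd_trace_nonneg (hX i) V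
    rw [← hm_def]
    linarith
  have hε0' : (0:ℝ) < Real.sqrt ε := Real.sqrt_pos.mpr hε0
  have hse : Real.sqrt ε * Real.sqrt ε = ε := Real.mul_self_sqrt hε0.le
  have hkey : ε * Real.sqrt ((k:ℝ) / ε) = Real.sqrt ((k:ℝ) * ε) := by
    rw [Real.sqrt_div (Nat.cast_nonneg k), Real.sqrt_mul (Nat.cast_nonneg k)]
    field_simp
    nlinarith [Real.sqrt_nonneg (k:ℝ)]
  have hbnd : 0 ≤ 3 * ν * Real.sqrt ((k:ℝ) / ε) := by positivity
  -- sum over T ∩ GM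
  have hTin : ∑ i ∈ T ∩ GM, z i ≤ 3 * n * ν * Real.sqrt ((k:ℝ) * ε) := by
    calc ∑ i ∈ T ∩ GM, z i ≤ ∑ _i ∈ T ∩ GM, 3 * ν * Real.sqrt ((k:ℝ) / ε) := by
          apply Finset.sum_le_sum
          intro i hi
          exact le_trans (le_abs_self _) ((hGM i).mp (Finset.mem_inter.mp hi).2)
      _ = ((T ∩ GM).card : ℝ) * (3 * ν * Real.sqrt ((k:ℝ) / ε)) := by
          rw [Finset.sum_const, nsmul_eq_mul]
      _ ≤ (ε * n) * (3 * ν * Real.sqrt ((k:ℝ) / ε)) := by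
          apply mul_le_mul_of_nonneg_right _ hbnd
          calc ((T ∩ GM).card : ℝ) ≤ (T.card : ℝ) := by
                exact_mod_cast Finset.card_le_card (Finset.inter_subset_left)
            _ ≤ ε * n := hT
      _ = 3 * n * ν * Real.sqrt ((k:ℝ) * ε) := by rw [← hkey]; ring
  -- sum over the bad set B
  set B : Finset (Fin n) := Finset.univ \ GM with hB_def
  have hBsum : ∑ i ∈ B, z i ≤ 3 * n * ν * Real.sqrt ((k:ℝ) * ε) := by
    have h1 : ∑ i ∈ B, z i + ∑ i ∈ GM, z i = ∑ i, z i :=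
      Finset.sum_sdiff (Finset.subset_univ GM)
    have h2 := abs_le.mp hsum
    have h3 := abs_le.mp hGMsum
    linarith [h2.2, h3.1]
  have hBT : -(ε * n * m) ≤ ∑ i ∈ B \ T, z i := by
    have h1 : ∑ i ∈ B \ T, z i ≥ ∑ _i ∈ B \ T, (-m) :=
      Finset.sum_le_sum fun i _ => hlow i
    rw [Finset.sum_const, nsmul_eq_mul] at h1
    have h2 : ((B \ T).card : ℝ) ≤ ε * n := by
      calc ((B \ T).card : ℝ) ≤ (B.card : ℝ) := by
            exact_mod_cast Finset.card_le_card (Finset.sdiff_subset)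
        _ ≤ ε * n := hGMc
    nlinarith
  have hTout : ∑ i ∈ T \ GM, z i ≤ 3 * n * ν * Real.sqrt ((k:ℝ) * ε) + n * ε * m := by
    have hset : T \ GM = B ∩ T := by
      ext i; simp [hB_def, and_comm]
    have hsplit : ∑ i ∈ B ∩ T, z i + ∑ i ∈ B \ T, z i = ∑ i ∈ B, z i :=
      Finset.sum_inter_add_sum_sdiff B T z
    rw [hset]
    nlinarith
  have hsplitT : ∑ i ∈ T ∩ GM, z i + ∑ i ∈ T \ GM, z i = ∑ i ∈ T, z i :=
    Finset.sum_inter_add_sum_sdiff T GM z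
  linarith


end
end

section
/- Moments of the centered normalized chi-square average: Let Z₁,…,Z_t be i.i.d. standard Gaussian N(0,1) random variables and, for an integer i ≥ 1, set M_i = E[((1/t) Σ_{j=1}^t (Z_j² − 1))^i]. Then for all integers m, i, t with 1 ≤ i ≤ 2m ≤ t, one has M_i ≤ 2 e^{2i} · i^{i/2} / t^{i/2}. -/
set_option maxHeartbeats 1000000


open MeasureTheory Matrix
open scoped BigOperators ENNReal NNReal

noncomputable section

section ChisqAux
open ProbabilityTheory Real

lemma exp_le_inv_one_sub' {y : ℝ} (h : 0 < 1 - y) : Real.exp y ≤ 1 / (1 - y) := by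
  rw [le_div_iff₀ h]
  have h2 := Real.add_one_le_exp (-y)
  have h3 : Real.exp y * Real.exp (-y) = 1 := by rw [← Real.exp_add]; simp
  nlinarith [Real.exp_pos y]

lemma chisq_gauss_exp_integral {c : ℝ} (hc : c < 1/2) :
    Integrable (fun x : ℝ => Real.exp (c * (x ^ 2 - 1))) (gaussianReal 0 1) ∧
    ∫ x, Real.exp (c * (x ^ 2 - 1)) ∂(gaussianReal 0 1)
      = Real.exp (-c) / Real.sqrt (1 - 2 * c) := by
  have hb : 0 < 1/2 - c := by linarith
  have hpt : ∀ x : ℝ, gaussianPDFReal 0 1 x * Real.exp (c * (x ^ 2 - 1))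
      = (Real.exp (-c) * (Real.sqrt (2 * π))⁻¹) * Real.exp (-(1/2 - c) * x ^ 2) := by
    intro x
    simp only [gaussianPDFReal, NNReal.coe_one, mul_one, sub_zero]
    rw [mul_assoc, ← Real.exp_add, mul_comm (Real.exp (-c)) _, mul_assoc, ← Real.exp_add]
    congr 1
    ring
  have hint : Integrable
      (fun x : ℝ => (Real.exp (-c) * (Real.sqrt (2*π))⁻¹) * Real.exp (-(1/2 - c) * x^2)) volume :=
    (integrable_exp_neg_mul_sq hb).const_mul _
  have hmeas : Measurable fun x => (gaussianPDFReal 0 1 x).toNNReal :=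
    (measurable_gaussianPDFReal 0 1).real_toNNReal
  have hγ : gaussianReal 0 1
      = volume.withDensity (fun x => ((gaussianPDFReal 0 1 x).toNNReal : ℝ≥0∞)) :=
    gaussianReal_of_var_ne_zero 0 one_ne_zero
  have hsmul : ∀ (g : ℝ → ℝ), (fun x => (gaussianPDFReal 0 1 x).toNNReal • g x)
      = fun x => gaussianPDFReal 0 1 x * g x := by
    intro g; funext x
    simp [NNReal.smul_def, Real.coe_toNNReal _ (gaussianPDFReal_nonneg 0 1 x)]
  have hfun : (fun x => gaussianPDFReal 0 1 x * Real.exp (c * (x ^ 2 - 1)))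
      = fun x => (Real.exp (-c) * (Real.sqrt (2*π))⁻¹) * Real.exp (-(1/2-c) * x^2) := funext hpt
  constructor
  · rw [hγ, integrable_withDensity_iff_integrable_smul hmeas, hsmul, hfun]
    exact hint
  · rw [hγ, integral_withDensity_eq_integral_smul hmeas, hsmul, hfun,
      integral_const_mul, integral_gaussian, mul_assoc]
    rw [div_eq_mul_inv]
    congr 1
    rw [← Real.sqrt_inv, ← Real.sqrt_inv (1 - 2*c), ← Real.sqrt_mul (by positivity)]
    congr 1
    rw [eq_comm, inv_eq_iff_eq_inv, eq_comm, inv_eq_one_div]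
    field_simp

lemma chisq_pos_side {l : ℝ} (hl0 : 0 ≤ l) (hl : l ≤ 3/8) :
    Real.exp (-l) / Real.sqrt (1 - 2 * l) ≤ Real.exp (8 * l ^ 2) := by
  have h2l : 0 < 1 - 2 * l := by linarith
  have hsq : Real.exp (-(l + 8 * l ^ 2)) ≤ Real.sqrt (1 - 2 * l) := by
    apply Real.le_sqrt_of_sq_le
    have h1 : Real.exp (-(l + 8*l^2)) ^ 2 = Real.exp (-(2*l + 16*l^2)) := by
      rw [← Real.exp_nat_mul]; ring_nf
    rw [h1]
    have h2 : Real.exp (-(2*l + 16*l^2)) ≤ 1 / (1 + (2*l + 16*l^2)) := by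
      have h3 := Real.add_one_le_exp (2*l + 16*l^2)
      rw [Real.exp_neg, inv_eq_one_div]
      apply one_div_le_one_div_of_le (by positivity)
      linarith
    refine h2.trans ?_
    rw [div_le_iff₀ (by positivity)]
    nlinarith [sq_nonneg l, mul_nonneg (mul_nonneg hl0 hl0) hl0]
  calc Real.exp (-l) / Real.sqrt (1 - 2*l)
      ≤ Real.exp (-l) / Real.exp (-(l + 8*l^2)) := by
        apply div_le_div_of_nonneg_left (Real.exp_pos _).le (Real.exp_pos _) hsq
    _ = Real.exp (8 * l ^ 2) := by rw [← Real.exp_sub]; ring_nf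

lemma chisq_neg_side {l : ℝ} (hl0 : 0 ≤ l) :
    Real.exp l / Real.sqrt (1 + 2 * l) ≤ Real.exp (8 * l ^ 2) := by
  have hpos : (0:ℝ) < 1 - (2*l - 16*l^2) := by nlinarith [sq_nonneg (4*l - 1/4)]
  have hsq : Real.exp (l - 8 * l ^ 2) ≤ Real.sqrt (1 + 2 * l) := by
    apply Real.le_sqrt_of_sq_le
    have h1 : Real.exp (l - 8*l^2) ^ 2 = Real.exp (2*l - 16*l^2) := by
      rw [← Real.exp_nat_mul]; ring_nf
    rw [h1]
    refine (exp_le_inv_one_sub' hpos).trans ?_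
    rw [div_le_iff₀ hpos]
    nlinarith [sq_nonneg l, mul_nonneg (mul_nonneg hl0 hl0) hl0]
  calc Real.exp l / Real.sqrt (1 + 2*l)
      ≤ Real.exp l / Real.exp (l - 8*l^2) := by
        apply div_le_div_of_nonneg_left (Real.exp_pos _).le (Real.exp_pos _) hsq
    _ = Real.exp (8 * l ^ 2) := by rw [← Real.exp_sub]; ring_nf

lemma chisq_fact_bound : ∀ i : ℕ, 1 ≤ i → (Nat.factorial i : ℝ) * 2 ^ i ≤ 2 * (i:ℝ) ^ i := by
  intro i hi
  induction i with
  | zero => norm_num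
  | succ n ih =>
    rcases Nat.eq_or_lt_of_le hi with h1 | h1
    · have hn0 : n = 0 := by omega
      subst hn0; norm_num [Nat.factorial]
    · have hn : 1 ≤ n := Nat.lt_succ_iff.mp h1
      have ihn := ih hn
      have hn0 : (0:ℝ) < n := by exact_mod_cast hn
      have key : 2 * (n:ℝ) ^ n ≤ ((n:ℝ) + 1) ^ n := by
        have hb := one_add_mul_le_pow (a := 1/(n:ℝ))
          (le_trans (by norm_num : (-2:ℝ) ≤ 0) (by positivity)) n
        have hb2 : (2:ℝ) ≤ (1 + 1/(n:ℝ)) ^ n := by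
          have : (n:ℝ) * (1/(n:ℝ)) = 1 := by field_simp
          nlinarith
        calc 2 * (n:ℝ)^n ≤ (1 + 1/(n:ℝ))^n * (n:ℝ)^n := by
              nlinarith [pow_pos hn0 n]
          _ = ((n:ℝ) + 1)^n := by
              rw [← mul_pow]; congr 1; field_simp
      have hfs : ((Nat.factorial (n+1)) : ℝ) = ((n:ℝ)+1) * (Nat.factorial n : ℝ) := by
        push_cast [Nat.factorial_succ]; ring
      rw [hfs]
      have hfp : (0:ℝ) ≤ (Nat.factorial n : ℝ) * 2 ^ n := by positivity
      calc ((n:ℝ)+1) * (Nat.factorial n : ℝ) * 2 ^ (n+1)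
          = 2*((n:ℝ)+1) * ((Nat.factorial n : ℝ) * 2 ^ n) := by ring
        _ ≤ 2*((n:ℝ)+1) * (2 * (n:ℝ)^n) := by
            apply mul_le_mul_of_nonneg_left ihn (by positivity)
        _ = 2*((n:ℝ)+1) * (n:ℝ)^n + ((n:ℝ)+1) * (2 * (n:ℝ)^n) := by ring
        _ ≤ 2*((n:ℝ)+1) * (n:ℝ)^n + ((n:ℝ)+1) * (((n:ℝ)+1) ^ n) := by nlinarith
        _ ≤ 2 * ((n:ℝ)+1) ^ (n+1) := by
            have : ((n:ℝ)+1)^(n+1) = ((n:ℝ)+1) * ((n:ℝ)+1)^n := by ring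
            nlinarith [pow_pos (by positivity : (0:ℝ) < (n:ℝ)+1) n, key]
        _ = 2 * ((n+1 : ℕ):ℝ) ^ (n+1) := by push_cast; ring

lemma chisq_keynum (i : ℕ) (hi : 1 ≤ i) :
    ((Nat.factorial i : ℝ)) ^ 2 * 16 ^ i * Real.exp i
      ≤ Real.exp (4 * i) * (i:ℝ) ^ (2 * i) := by
  have h1 := chisq_fact_bound i hi
  have hi0 : (0:ℝ) < i := by exact_mod_cast hi
  have hsq : ((Nat.factorial i : ℝ) * 2 ^ i) ^ 2 ≤ (2 * (i:ℝ)^i)^2 :=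
    pow_le_pow_left₀ (by positivity) h1 2
  have h2 : ((Nat.factorial i : ℝ))^2 * 16^i ≤ 4 * (i:ℝ)^(2*i) * 4^i := by
    have e1 : ((Nat.factorial i : ℝ) * 2 ^ i) ^ 2 * 4 ^ i = ((Nat.factorial i : ℝ))^2 * 16^i := by
      rw [mul_pow, show ((2:ℝ)^i)^2 = 4^i by rw [← pow_mul, mul_comm, pow_mul]; norm_num,
        show (16:ℝ)^i = 4^i * 4^i by rw [← mul_pow]; norm_num]
      ring
    have e2 : (2 * (i:ℝ)^i)^2 * 4^i = 4 * (i:ℝ)^(2*i) * 4^i := by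
      rw [mul_pow, ← pow_mul]; ring_nf
    nlinarith [pow_pos (show (0:ℝ) < 4 by norm_num) i, sq_nonneg ((Nat.factorial i : ℝ) * 2 ^ i)]
  have h3 : 4 * (4:ℝ)^i ≤ Real.exp (3 * i) := by
    have he3 : (16:ℝ) ≤ Real.exp 3 := by
      have h := Real.exp_one_gt_d9
      have h3' : Real.exp 3 = (Real.exp 1)^3 := by rw [← Real.exp_nat_mul]; norm_num
      have h4 : (2.7182818283:ℝ)^3 ≤ (Real.exp 1)^3 := pow_le_pow_left₀ (by norm_num) h.le 3
      have h5 : (16:ℝ) ≤ (2.7182818283:ℝ)^3 := by norm_num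
      linarith
    have he : Real.exp (3 * i) = (Real.exp 3) ^ i := by rw [← Real.exp_nat_mul]; ring_nf
    rw [he]
    calc 4 * (4:ℝ)^i ≤ 4^i * 4^i := by
          have h4 : (4:ℝ) ≤ 4 ^ i := by
            calc (4:ℝ) = 4^1 := by norm_num
            _ ≤ 4^i := pow_le_pow_right₀ (by norm_num) hi
          nlinarith [pow_pos (show (0:ℝ) < 4 by norm_num) i]
      _ = 16 ^ i := by rw [← mul_pow]; norm_num
      _ ≤ (Real.exp 3)^i := pow_le_pow_left₀ (by norm_num) he3 i
  have hexp : Real.exp (4 * i) = Real.exp (3 * i) * Real.exp i := by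
    rw [← Real.exp_add]; ring_nf
  rw [hexp]
  calc (Nat.factorial i : ℝ)^2 * 16^i * Real.exp i
      ≤ (4 * (i:ℝ)^(2*i) * 4^i) * Real.exp i :=
        mul_le_mul_of_nonneg_right h2 (Real.exp_pos _).le
    _ = (4 * (4:ℝ)^i) * ((i:ℝ)^(2*i) * Real.exp i) := by ring
    _ ≤ Real.exp (3*(i:ℝ)) * ((i:ℝ)^(2*i) * Real.exp i) :=
        mul_le_mul_of_nonneg_right h3 (by positivity)
    _ = Real.exp (3*(i:ℝ)) * Real.exp i * (i:ℝ)^(2*i) := by ring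

end ChisqAux

/-- **Moments of the centered normalized chi-square average.** For i.i.d. standard
Gaussians `Z₁,…,Z_t` and `M_i = E[((1/t)∑(Z_j² − 1))^i]`, if `1 ≤ i ≤ 2m ≤ t` then
`M_i ≤ 2 e^{2i} i^{i/2} / t^{i/2}`. -/
theorem chisq_centered_moments
    (m i t : ℕ) (hi : 1 ≤ i) (him : i ≤ 2 * m) (hmt : 2 * m ≤ t) :
    (∫ ω : Fin t → ℝ, ((t : ℝ)⁻¹ * ∑ j, (ω j ^ 2 - 1)) ^ i
        ∂(Measure.pi fun _ : Fin t => ProbabilityTheory.gaussianReal 0 1)) ≤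
      2 * Real.exp (2 * i) * (i : ℝ) ^ ((i : ℝ) / 2) / (t : ℝ) ^ ((i : ℝ) / 2) := by
  have hit : i ≤ t := him.trans hmt
  have ht1 : 1 ≤ t := hi.trans hit
  have ht0 : (0:ℝ) < t := by exact_mod_cast ht1
  have hi0 : (0:ℝ) < i := by exact_mod_cast hi
  set l : ℝ := Real.sqrt (i / (16 * t)) with hldef
  have harg : (0:ℝ) < i / (16*t) := by positivity
  have hl2 : l ^ 2 = (i:ℝ) / (16 * t) := Real.sq_sqrt harg.le
  have hl0 : 0 < l := Real.sqrt_pos.2 harg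
  have hll : l ≤ 3/8 := by
    have h116 : (i:ℝ)/(16*t) ≤ 1/16 := by
      rw [div_le_div_iff₀ (by positivity) (by norm_num)]
      have : (i:ℝ) ≤ t := by exact_mod_cast hit
      nlinarith
    have h1 : l ≤ Real.sqrt (1/16) := Real.sqrt_le_sqrt h116
    have h4 : Real.sqrt ((1:ℝ)/16) = 1/4 := by
      rw [show (1:ℝ)/16 = (1/4)^2 by norm_num, Real.sqrt_sq (by norm_num)]
    rw [h4] at h1; linarith
  obtain ⟨hIp, hEp⟩ := chisq_gauss_exp_integral (c := l) (by linarith)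
  obtain ⟨hIm, hEm⟩ := chisq_gauss_exp_integral (c := -l) (by linarith)
  have hBp : ∫ x, Real.exp (l * (x^2-1)) ∂(ProbabilityTheory.gaussianReal 0 1) ≤ Real.exp (8*l^2) := by
    rw [hEp]; exact chisq_pos_side hl0.le hll
  have hBm : ∫ x, Real.exp ((-l) * (x^2-1)) ∂(ProbabilityTheory.gaussianReal 0 1) ≤ Real.exp (8*l^2) := by
    rw [hEm, neg_neg, show (1 - 2 * (-l)) = 1 + 2*l by ring]
    exact chisq_neg_side hl0.le
  -- switch to the product measure as a volume
  letI : MeasureSpace ℝ := ⟨ProbabilityTheory.gaussianReal 0 1⟩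
  haveI : SigmaFinite (volume : Measure ℝ) := inferInstanceAs (SigmaFinite (ProbabilityTheory.gaussianReal 0 1))
  have hvol : (volume : Measure (Fin t → ℝ)) = Measure.pi fun _ : Fin t => ProbabilityTheory.gaussianReal 0 1 := rfl
  set S : (Fin t → ℝ) → ℝ := fun ω => ∑ j, (ω j ^ 2 - 1) with hSdef
  have hprod : ∀ c : ℝ, (fun ω : Fin t → ℝ => Real.exp (c * S ω))
      = fun ω => ∏ j, Real.exp (c * (ω j ^ 2 - 1)) := by
    intro c; funext ω
    rw [hSdef]
    simp only
    rw [Finset.mul_sum, Real.exp_sum]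
  have hIexp : ∀ c : ℝ, Integrable (fun x : ℝ => Real.exp (c * (x ^ 2 - 1))) (ProbabilityTheory.gaussianReal 0 1) →
      Integrable (fun ω : Fin t → ℝ => Real.exp (c * S ω)) volume := by
    intro c hc
    rw [hprod c]
    exact Integrable.fintype_prod
      (f := fun _ : Fin t => fun x : ℝ => Real.exp (c * (x ^ 2 - 1))) (fun _ => hc)
  have hEexp : ∀ c : ℝ, (∫ ω : Fin t → ℝ, Real.exp (c * S ω))
      = (∫ x : ℝ, Real.exp (c * (x ^ 2 - 1)) ∂(ProbabilityTheory.gaussianReal 0 1)) ^ t := by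
    intro c
    rw [hprod c]
    simpa [← hvol] using integral_fintype_prod_eq_pow (ι := Fin t) (μ := ProbabilityTheory.gaussianReal 0 1)
      (fun x : ℝ => Real.exp (c * (x ^ 2 - 1)))
  have h8 : (8 * l^2) * t = (i:ℝ)/2 := by rw [hl2]; field_simp; ring
  have hMb : ∀ c : ℝ, (∫ x, Real.exp (c * (x^2-1)) ∂(ProbabilityTheory.gaussianReal 0 1)) ≤ Real.exp (8*l^2) →
      (∫ ω : Fin t → ℝ, Real.exp (c * S ω)) ≤ Real.exp ((i:ℝ)/2) := by
    intro c hc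
    rw [hEexp c]
    have hnn : 0 ≤ ∫ x, Real.exp (c * (x^2-1)) ∂(ProbabilityTheory.gaussianReal 0 1) :=
      integral_nonneg fun x => (Real.exp_pos _).le
    calc (∫ x, Real.exp (c * (x^2-1)) ∂(ProbabilityTheory.gaussianReal 0 1)) ^ t
        ≤ (Real.exp (8*l^2)) ^ t := pow_le_pow_left₀ hnn hc t
      _ = Real.exp ((8*l^2) * t) := by rw [mul_comm (8*l^2) (t:ℝ), Real.exp_nat_mul]
      _ = Real.exp ((i:ℝ)/2) := by rw [h8]
  have hSmeas : Measurable S := by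
    apply Finset.measurable_sum
    intro j _
    exact ((measurable_pi_apply j).pow_const 2).sub measurable_const
  set g : (Fin t → ℝ) → ℝ := fun ω =>
    (Nat.factorial i : ℝ)/l^i * (Real.exp (l * S ω) + Real.exp ((-l) * S ω)) with hgdef
  have hIg : Integrable g volume := ((hIexp l hIp).add (hIexp (-l) hIm)).const_mul _
  have hkey : ∀ ω, |S ω| ^ i ≤ g ω := by
    intro ω
    have h1 : (l * |S ω|) ^ i / (Nat.factorial i : ℝ) ≤ Real.exp (l * |S ω|) :=
      Real.pow_div_factorial_le_exp _ (by positivity) i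
    have h2 : Real.exp (l * |S ω|) ≤ Real.exp (l * S ω) + Real.exp ((-l) * S ω) := by
      rcases abs_cases (S ω) with ⟨h, _⟩ | ⟨h, _⟩
      · rw [h]; nlinarith [Real.exp_pos ((-l) * S ω)]
      · rw [h, show l * -(S ω) = (-l) * (S ω) by ring]
        nlinarith [Real.exp_pos (l * S ω)]
    have hli : 0 < l ^ i := pow_pos hl0 i
    have h3 : |S ω| ^ i = (l * |S ω|)^i / l^i := by
      rw [mul_pow]; field_simp
    rw [h3, hgdef]
    calc (l*|S ω|)^i / l^i
        = ((l*|S ω|)^i / (Nat.factorial i:ℝ)) * ((Nat.factorial i:ℝ) / l^i) := by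
          field_simp
      _ ≤ Real.exp (l*|S ω|) * ((Nat.factorial i:ℝ)/l^i) :=
          mul_le_mul_of_nonneg_right h1 (by positivity)
      _ ≤ (Real.exp (l*S ω) + Real.exp ((-l)*S ω)) * ((Nat.factorial i:ℝ)/l^i) :=
          mul_le_mul_of_nonneg_right h2 (by positivity)
      _ = (Nat.factorial i:ℝ)/l^i * (Real.exp (l*S ω) + Real.exp ((-l)*S ω)) := by ring
  have hIf : Integrable (fun ω => S ω ^ i) volume := by
    apply hIg.mono' ((hSmeas.pow_const i).aestronglyMeasurable)
    filter_upwards with ω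
    rw [Real.norm_eq_abs, abs_pow]
    exact hkey ω
  have hmono : (∫ ω, S ω ^ i) ≤ (Nat.factorial i:ℝ)/l^i * (2 * Real.exp ((i:ℝ)/2)) := by
    have step1 : (∫ ω, S ω ^ i) ≤ ∫ ω, g ω := by
      apply integral_mono hIf hIg
      intro ω
      exact le_trans (le_abs_self _) (by rw [abs_pow]; exact hkey ω)
    have step2 : (∫ ω, g ω)
        = (Nat.factorial i:ℝ)/l^i *
          ((∫ ω, Real.exp (l * S ω)) + ∫ ω, Real.exp ((-l) * S ω)) := by
      rw [hgdef]
      rw [integral_const_mul, integral_add (hIexp l hIp) (hIexp (-l) hIm)]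
    have step3 : (∫ ω, Real.exp (l * S ω)) + (∫ ω, Real.exp ((-l) * S ω))
        ≤ 2 * Real.exp ((i:ℝ)/2) := by
      have A := hMb l hBp
      have B := hMb (-l) hBm
      linarith
    calc (∫ ω, S ω ^ i) ≤ ∫ ω, g ω := step1
      _ = _ := step2
      _ ≤ (Nat.factorial i:ℝ)/l^i * (2 * Real.exp ((i:ℝ)/2)) :=
          mul_le_mul_of_nonneg_left step3 (by positivity)
  have hgoal1 : (∫ ω : Fin t → ℝ, ((t:ℝ)⁻¹ * S ω)^i) = ((t:ℝ)⁻¹)^i * ∫ ω, S ω ^ i := by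
    simp_rw [mul_pow]
    exact integral_const_mul _ _
  set A : ℝ := ((t:ℝ)⁻¹)^i * ((Nat.factorial i:ℝ)/l^i * (2 * Real.exp ((i:ℝ)/2))) with hAdef
  set R : ℝ := 2 * Real.exp (2 * i) * (i : ℝ) ^ ((i : ℝ) / 2) / (t : ℝ) ^ ((i : ℝ) / 2) with hRdef
  have hintA : (∫ ω : Fin t → ℝ, ((t:ℝ)⁻¹ * S ω)^i) ≤ A := by
    rw [hgoal1, hAdef]
    exact mul_le_mul_of_nonneg_left hmono (by positivity)
  have hA0 : 0 ≤ A := by rw [hAdef]; positivity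
  have hR0 : 0 < R := by
    rw [hRdef]
    have := Real.rpow_pos_of_pos hi0 ((i:ℝ)/2)
    have := Real.rpow_pos_of_pos ht0 ((i:ℝ)/2)
    positivity
  -- squares
  have hrp : ∀ x : ℝ, 0 < x → (x ^ ((i:ℝ)/2))^2 = x ^ i := by
    intro x hx
    rw [← Real.rpow_natCast (x ^ ((i:ℝ)/2)) 2, ← Real.rpow_mul hx.le]
    norm_num
  have hE2 : (Real.exp ((i:ℝ)/2))^2 = Real.exp i := by
    rw [← Real.exp_nat_mul]
    congr 1
    push_cast; ring
  have hE4 : (Real.exp (2*(i:ℝ)))^2 = Real.exp (4*i) := by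
    rw [← Real.exp_nat_mul]
    congr 1
    push_cast; ring
  have hine : ((i:ℝ)^i) ≠ 0 := by positivity
  have htne : ((t:ℝ)^i) ≠ 0 := by positivity
  have h16ne : ((16:ℝ)^i) ≠ 0 := by positivity
  have hlne : (l^i) ≠ 0 := by positivity
  have hA2eq : A^2 = 4 * (Nat.factorial i:ℝ)^2 * 16^i * Real.exp i / ((i:ℝ)^i * (t:ℝ)^i) := by
    have hu : (l^i)^2 = (i:ℝ)^i / (16^i * (t:ℝ)^i) := by
      rw [← pow_mul, mul_comm i 2, pow_mul, hl2, div_pow, mul_pow]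
    have expand : A^2 = (((t:ℝ)⁻¹)^i)^2 *
        ((Nat.factorial i:ℝ)^2 / (l^i)^2) * (4 * (Real.exp ((i:ℝ)/2))^2) := by
      rw [hAdef]; ring
    rw [expand, hu, hE2, inv_pow]
    field_simp
  have hR2eq : R^2 = 4 * Real.exp (4*i) * (i:ℝ)^i / ((t:ℝ)^i) := by
    have expand : R^2 = 4 * (Real.exp (2*(i:ℝ)))^2 *
        ((i:ℝ) ^ ((i:ℝ)/2))^2 / ((t:ℝ) ^ ((i:ℝ)/2))^2 := by
      rw [hRdef]; ring
    rw [expand, hE4, hrp _ hi0, hrp _ ht0]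
  have hsqle : A^2 ≤ R^2 := by
    rw [hA2eq, hR2eq, div_le_div_iff₀ (by positivity) (by positivity)]
    have hk := chisq_keynum i hi
    have hii : (i:ℝ)^(2*i) = (i:ℝ)^i * (i:ℝ)^i := by rw [two_mul, pow_add]
    rw [hii] at hk
    calc 4 * (Nat.factorial i:ℝ)^2 * 16^i * Real.exp i * (t:ℝ)^i
        = 4 * ((Nat.factorial i:ℝ)^2 * 16^i * Real.exp i) * (t:ℝ)^i := by ring
      _ ≤ 4 * (Real.exp (4*i) * ((i:ℝ)^i * (i:ℝ)^i)) * (t:ℝ)^i := by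
          have h := mul_le_mul_of_nonneg_right hk (by positivity : (0:ℝ) ≤ (t:ℝ)^i)
          linarith [h]
      _ = 4 * Real.exp (4*i) * (i:ℝ)^i * ((i:ℝ)^i * (t:ℝ)^i) := by ring
  have hAR : A ≤ R := by
    have h1 : Real.sqrt (A^2) ≤ Real.sqrt (R^2) := Real.sqrt_le_sqrt hsqle
    rwa [Real.sqrt_sq hA0, Real.sqrt_sq hR0.le] at h1
  rw [← hvol]
  exact le_trans hintA hAR

end
end
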